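/- Let A be any symmetric 3×3 real matrix. Then there exists T ∈ GL(3,ℝ) such that det(T)·(T⁻¹)ᵀ A T⁻¹ is one of the six matrices: 0, diag(1,1,1), diag(1,1,−1), diag(1,1,0), diag(1,−1,0), diag(1,0,0). Equivalently, every unimodular linear Poisson structure on ℝ³, given by a quadratic function f = XᵀAX, is isomorphic to one with f ∈ {0, x²+y²+z², x²+y²−z², x²+y², x²−y², x²}. -/

import Mathlib

open Matrix

set_option maxHeartbeats 1000000 in
private lemma sign_cases_aux (s : Fin 3 → ℝ) (h : ∀ i, s i = -1 ∨ s i = 0 ∨ s i = 1) :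
    ∃ τ : Equiv.Perm (Fin 3), ∃ c : ℝ, c ≠ 0 ∧
      ((fun i => c * s (τ i)) = ![1,1,1] ∨ (fun i => c * s (τ i)) = ![1,1,-1] ∨
       (fun i => c * s (τ i)) = ![1,1,0] ∨ (fun i => c * s (τ i)) = ![1,-1,0] ∨
       (fun i => c * s (τ i)) = ![1,0,0] ∨ (fun i => c * s (τ i)) = ![0,0,0]) := by
  rcases h 0 with ha | ha | ha <;> rcases h 1 with hb | hb | hb <;>
    rcases h 2 with hc | hc | hc
  · refine ⟨(Equiv.refl (Fin 3)), -1, by norm_num, Or.inl ?_⟩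
    funext i; fin_cases i <;> simp [ha, hb, hc, Equiv.swap_apply_def, Equiv.Perm.mul_apply] <;> norm_num
  · refine ⟨(Equiv.refl (Fin 3)), -1, by norm_num, Or.inr (Or.inr (Or.inl ?_))⟩
    funext i; fin_cases i <;> simp [ha, hb, hc, Equiv.swap_apply_def, Equiv.Perm.mul_apply] <;> norm_num
  · refine ⟨(Equiv.refl (Fin 3)), -1, by norm_num, Or.inr (Or.inl ?_)⟩
    funext i; fin_cases i <;> simp [ha, hb, hc, Equiv.swap_apply_def, Equiv.Perm.mul_apply] <;> norm_num
  · refine ⟨(Equiv.swap 1 2), -1, by norm_num, Or.inr (Or.inr (Or.inl ?_))⟩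
    funext i; fin_cases i <;> simp [ha, hb, hc, Equiv.swap_apply_def, Equiv.Perm.mul_apply] <;> norm_num
  · refine ⟨(Equiv.refl (Fin 3)), -1, by norm_num, Or.inr (Or.inr (Or.inr (Or.inr (Or.inl ?_))))⟩
    funext i; fin_cases i <;> simp [ha, hb, hc, Equiv.swap_apply_def, Equiv.Perm.mul_apply] <;> norm_num
  · refine ⟨(Equiv.swap 1 2), -1, by norm_num, Or.inr (Or.inr (Or.inr (Or.inl ?_)))⟩
    funext i; fin_cases i <;> simp [ha, hb, hc, Equiv.swap_apply_def, Equiv.Perm.mul_apply] <;> norm_num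
  · refine ⟨(Equiv.swap 1 2), -1, by norm_num, Or.inr (Or.inl ?_)⟩
    funext i; fin_cases i <;> simp [ha, hb, hc, Equiv.swap_apply_def, Equiv.Perm.mul_apply] <;> norm_num
  · refine ⟨(Equiv.refl (Fin 3)), -1, by norm_num, Or.inr (Or.inr (Or.inr (Or.inl ?_)))⟩
    funext i; fin_cases i <;> simp [ha, hb, hc, Equiv.swap_apply_def, Equiv.Perm.mul_apply] <;> norm_num
  · refine ⟨(Equiv.swap 0 2), 1, by norm_num, Or.inr (Or.inl ?_)⟩
    funext i; fin_cases i <;> simp [ha, hb, hc, Equiv.swap_apply_def, Equiv.Perm.mul_apply] <;> norm_num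
  · refine ⟨(Equiv.swap 0 2), -1, by norm_num, Or.inr (Or.inr (Or.inl ?_))⟩
    funext i; fin_cases i <;> simp [ha, hb, hc, Equiv.swap_apply_def, Equiv.Perm.mul_apply] <;> norm_num
  · refine ⟨(Equiv.swap 0 1), -1, by norm_num, Or.inr (Or.inr (Or.inr (Or.inr (Or.inl ?_))))⟩
    funext i; fin_cases i <;> simp [ha, hb, hc, Equiv.swap_apply_def, Equiv.Perm.mul_apply] <;> norm_num
  · refine ⟨(Equiv.swap 0 2), 1, by norm_num, Or.inr (Or.inr (Or.inr (Or.inl ?_)))⟩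
    funext i; fin_cases i <;> simp [ha, hb, hc, Equiv.swap_apply_def, Equiv.Perm.mul_apply] <;> norm_num
  · refine ⟨(Equiv.swap 0 2), -1, by norm_num, Or.inr (Or.inr (Or.inr (Or.inr (Or.inl ?_))))⟩
    funext i; fin_cases i <;> simp [ha, hb, hc, Equiv.swap_apply_def, Equiv.Perm.mul_apply] <;> norm_num
  · refine ⟨(Equiv.refl (Fin 3)), 1, by norm_num, Or.inr (Or.inr (Or.inr (Or.inr (Or.inr ?_))))⟩
    funext i; fin_cases i <;> simp [ha, hb, hc, Equiv.swap_apply_def, Equiv.Perm.mul_apply] <;> norm_num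
  · refine ⟨(Equiv.swap 0 2), 1, by norm_num, Or.inr (Or.inr (Or.inr (Or.inr (Or.inl ?_))))⟩
    funext i; fin_cases i <;> simp [ha, hb, hc, Equiv.swap_apply_def, Equiv.Perm.mul_apply] <;> norm_num
  · refine ⟨(Equiv.swap 0 2), -1, by norm_num, Or.inr (Or.inr (Or.inr (Or.inl ?_)))⟩
    funext i; fin_cases i <;> simp [ha, hb, hc, Equiv.swap_apply_def, Equiv.Perm.mul_apply] <;> norm_num
  · refine ⟨(Equiv.swap 0 1), 1, by norm_num, Or.inr (Or.inr (Or.inr (Or.inr (Or.inl ?_))))⟩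
    funext i; fin_cases i <;> simp [ha, hb, hc, Equiv.swap_apply_def, Equiv.Perm.mul_apply] <;> norm_num
  · refine ⟨(Equiv.swap 0 2), 1, by norm_num, Or.inr (Or.inr (Or.inl ?_))⟩
    funext i; fin_cases i <;> simp [ha, hb, hc, Equiv.swap_apply_def, Equiv.Perm.mul_apply] <;> norm_num
  · refine ⟨(Equiv.swap 0 2), -1, by norm_num, Or.inr (Or.inl ?_)⟩
    funext i; fin_cases i <;> simp [ha, hb, hc, Equiv.swap_apply_def, Equiv.Perm.mul_apply] <;> norm_num
  · refine ⟨(Equiv.refl (Fin 3)), 1, by norm_num, Or.inr (Or.inr (Or.inr (Or.inl ?_)))⟩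
    funext i; fin_cases i <;> simp [ha, hb, hc, Equiv.swap_apply_def, Equiv.Perm.mul_apply] <;> norm_num
  · refine ⟨(Equiv.swap 1 2), 1, by norm_num, Or.inr (Or.inl ?_)⟩
    funext i; fin_cases i <;> simp [ha, hb, hc, Equiv.swap_apply_def, Equiv.Perm.mul_apply] <;> norm_num
  · refine ⟨(Equiv.swap 1 2), 1, by norm_num, Or.inr (Or.inr (Or.inr (Or.inl ?_)))⟩
    funext i; fin_cases i <;> simp [ha, hb, hc, Equiv.swap_apply_def, Equiv.Perm.mul_apply] <;> norm_num
  · refine ⟨(Equiv.refl (Fin 3)), 1, by norm_num, Or.inr (Or.inr (Or.inr (Or.inr (Or.inl ?_))))⟩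
    funext i; fin_cases i <;> simp [ha, hb, hc, Equiv.swap_apply_def, Equiv.Perm.mul_apply] <;> norm_num
  · refine ⟨(Equiv.swap 1 2), 1, by norm_num, Or.inr (Or.inr (Or.inl ?_))⟩
    funext i; fin_cases i <;> simp [ha, hb, hc, Equiv.swap_apply_def, Equiv.Perm.mul_apply] <;> norm_num
  · refine ⟨(Equiv.refl (Fin 3)), 1, by norm_num, Or.inr (Or.inl ?_)⟩
    funext i; fin_cases i <;> simp [ha, hb, hc, Equiv.swap_apply_def, Equiv.Perm.mul_apply] <;> norm_num
  · refine ⟨(Equiv.refl (Fin 3)), 1, by norm_num, Or.inr (Or.inr (Or.inl ?_))⟩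
    funext i; fin_cases i <;> simp [ha, hb, hc, Equiv.swap_apply_def, Equiv.Perm.mul_apply] <;> norm_num
  · refine ⟨(Equiv.refl (Fin 3)), 1, by norm_num, Or.inl ?_⟩
    funext i; fin_cases i <;> simp [ha, hb, hc, Equiv.swap_apply_def, Equiv.Perm.mul_apply] <;> norm_num

private lemma perm_congr_aux (s : Fin 3 → ℝ) (σ : Equiv.Perm (Fin 3)) :
    (σ.permMatrix ℝ)ᵀ * diagonal s * (σ.permMatrix ℝ) = diagonal (fun i => s (σ⁻¹ i)) := by
  have h1 : (σ.permMatrix ℝ)ᵀ = (σ⁻¹).permMatrix ℝ := by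
    ext i j
    simp only [Equiv.Perm.permMatrix, PEquiv.toMatrix, Equiv.toPEquiv, transpose_apply,
      Equiv.coe_fn_mk, Option.mem_def, Option.some.injEq]
    congr 1
    simp [Equiv.Perm.inv_def, Equiv.eq_symm_apply, eq_comm]
  rw [h1, PEquiv.toMatrix_toPEquiv_mul, PEquiv.mul_toMatrix_toPEquiv]
  ext i j
  simp [submatrix, diagonal, Equiv.eq_symm_apply]

private lemma diag_scale_aux (d : Fin 3 → ℝ) :
    ∃ S : Matrix (Fin 3) (Fin 3) ℝ, IsUnit S.det ∧ ∃ s : Fin 3 → ℝ,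
      (∀ i, s i = -1 ∨ s i = 0 ∨ s i = 1) ∧ Sᵀ * diagonal d * S = diagonal s := by
  classical
  set p : Fin 3 → ℝ := fun i => if d i = 0 then 1 else (Real.sqrt |d i|)⁻¹ with hp
  have hpne : ∀ i, p i ≠ 0 := by
    intro i; by_cases h : d i = 0
    · simp [hp, h]
    · have : Real.sqrt |d i| ≠ 0 := by simp [Real.sqrt_ne_zero', abs_pos, h]
      simp [hp, h, this]
  refine ⟨diagonal p, ?_, fun i => p i * d i * p i, ?_, ?_⟩
  · simp only [det_diagonal]
    exact isUnit_iff_ne_zero.mpr (Finset.prod_ne_zero_iff.mpr fun i _ => hpne i)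
  · intro i
    show p i * d i * p i = -1 ∨ _ ∨ _
    by_cases h : d i = 0
    · right; left; simp [hp, h]
    · have habs : Real.sqrt |d i| * Real.sqrt |d i| = |d i| :=
        Real.mul_self_sqrt (abs_nonneg _)
      have hs : Real.sqrt |d i| ≠ 0 := by
        simp [Real.sqrt_ne_zero', abs_pos, h]
      have heq : p i * d i * p i = d i / |d i| := by
        rw [hp]; simp only [h, if_false]
        field_simp
        rw [Real.sq_sqrt (abs_nonneg _)]
      show p i * d i * p i = -1 ∨ p i * d i * p i = 0 ∨ p i * d i * p i = 1
      rw [heq]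
      rcases lt_trichotomy (d i) 0 with hlt | heq2 | hgt
      · left; rw [abs_of_neg hlt]; field_simp
      · exact absurd heq2 h
      · right; right; rw [abs_of_pos hgt]; field_simp
  · rw [diagonal_transpose, diagonal_mul_diagonal, diagonal_mul_diagonal]

private lemma spectral_aux (A : Matrix (Fin 3) (Fin 3) ℝ) (hA : A.IsSymm) :
    ∃ S : Matrix (Fin 3) (Fin 3) ℝ, IsUnit S.det ∧
      ∃ h : A.IsHermitian, Sᵀ * A * S = diagonal h.eigenvalues := by
  have hH : A.IsHermitian := by
    rw [Matrix.IsHermitian, conjTranspose]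
    exact hA
  refine ⟨(hH.eigenvectorUnitary : Matrix (Fin 3) (Fin 3) ℝ), ?_, hH, ?_⟩
  · exact Matrix.isUnit_iff_isUnit_det _ |>.mp
      (Unitary.toUnits hH.eigenvectorUnitary).isUnit
  · have h := hH.conjStarAlgAut_star_eigenvectorUnitary
    rw [Unitary.conjStarAlgAut_star_apply] at h
    rw [Matrix.star_eq_conjTranspose] at h
    simp only [conjTranspose, map_map] at h
    exact h

/-- Every symmetric 3×3 real matrix `A` can be brought, by some
`T ∈ GL(3,ℝ)` acting as `A ↦ det(T)·(T⁻¹)ᵀ A T⁻¹`, to one of the six matrices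
`0, diag(1,1,1), diag(1,1,−1), diag(1,1,0), diag(1,−1,0), diag(1,0,0)`;
i.e. every unimodular linear Poisson structure on `ℝ³` is isomorphic to one with
`f ∈ {0, x²+y²+z², x²+y²−z², x²+y², x²−y², x²}`. -/
theorem unimodular_classification
    (A : Matrix (Fin 3) (Fin 3) ℝ) (hA : A.IsSymm) :
    ∃ T : Matrix (Fin 3) (Fin 3) ℝ, IsUnit T.det ∧
      (T.det • ((T⁻¹)ᵀ * A * T⁻¹) = 0 ∨
       T.det • ((T⁻¹)ᵀ * A * T⁻¹) = Matrix.diagonal ![1, 1, 1] ∨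
       T.det • ((T⁻¹)ᵀ * A * T⁻¹) = Matrix.diagonal ![1, 1, -1] ∨
       T.det • ((T⁻¹)ᵀ * A * T⁻¹) = Matrix.diagonal ![1, 1, 0] ∨
       T.det • ((T⁻¹)ᵀ * A * T⁻¹) = Matrix.diagonal ![1, -1, 0] ∨
       T.det • ((T⁻¹)ᵀ * A * T⁻¹) = Matrix.diagonal ![1, 0, 0]) := by
  classical
  -- Step 1: orthogonal diagonalization
  obtain ⟨S₁, hS₁, hH, h1⟩ := spectral_aux A hA
  -- Step 2: scale to signs
  obtain ⟨S₂, hS₂, s, hs, h2⟩ := diag_scale_aux hH.eigenvalues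
  -- Step 3: permute and flip sign
  obtain ⟨τ, c, hc, hcase⟩ := sign_cases_aux s hs
  set σ := τ⁻¹ with hσ
  set P := σ.permMatrix ℝ with hP
  have hPdet : IsUnit P.det := by
    rw [hP, Matrix.det_permutation]
    rcases Int.units_eq_one_or (Equiv.Perm.sign σ) with h | h <;> simp [h]
  have h3 : Pᵀ * diagonal s * P = diagonal (fun i => s (τ i)) := by
    rw [hP, perm_congr_aux s σ, hσ, inv_inv]
  -- combined congruence matrix
  set S : Matrix (Fin 3) (Fin 3) ℝ := S₁ * S₂ * P with hS
  have hSdet : IsUnit S.det := by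
    rw [hS, det_mul, det_mul]
    exact (hS₁.mul hS₂).mul hPdet
  have hStot : c • (Sᵀ * A * S) = diagonal (fun i => c * s (τ i)) := by
    have : Sᵀ * A * S = diagonal (fun i => s (τ i)) := by
      have e1 : Sᵀ * A * S = Pᵀ * (S₂ᵀ * (S₁ᵀ * A * S₁) * S₂) * P := by
        rw [hS]; simp only [transpose_mul]; noncomm_ring
      rw [e1, h1, h2, h3]
    rw [this, smul_eq_diagonal_mul, diagonal_mul_diagonal]
  -- build T
  have hdetS : S.det ≠ 0 := hSdet.ne_zero
  set d : ℝ := (c * S.det)⁻¹ with hd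
  have hdne : d ≠ 0 := by
    rw [hd]; exact inv_ne_zero (mul_ne_zero hc hdetS)
  set S' : Matrix (Fin 3) (Fin 3) ℝ := d • S with hS'
  have hS'det : S'.det = d ^ 3 * S.det := by
    rw [hS', det_smul]; norm_num
  have hS'unit : IsUnit S'.det := by
    rw [hS'det]
    exact isUnit_iff_ne_zero.mpr (mul_ne_zero (pow_ne_zero _ hdne) hdetS)
  refine ⟨S'⁻¹, ?_, ?_⟩
  · rw [det_nonsing_inv]
    exact isUnit_iff_ne_zero.mpr (by simp [Ring.inverse_eq_inv', hS'unit.ne_zero])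
  · have hinv : S'⁻¹⁻¹ = S' := nonsing_inv_nonsing_inv _ hS'unit
    have hdet : S'⁻¹.det = (S'.det)⁻¹ := by rw [det_nonsing_inv, Ring.inverse_eq_inv']
    rw [hinv, hdet]
    have hexp : (S'.det)⁻¹ • (S'ᵀ * A * S') = c • (Sᵀ * A * S) := by
      rw [hS'det, hS', transpose_smul, smul_mul_assoc, mul_smul_comm, smul_mul_assoc,
        smul_smul, smul_smul]
      congr 1
      rw [hd]
      field_simp
    rw [hexp, hStot]
    rcases hcase with h | h | h | h | h | h <;> rw [h]
    · right; left; rfl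
    · right; right; left; rfl
    · right; right; right; left; rfl
    · right; right; right; right; left; rfl
    · right; right; right; right; right; rfl
    · left
      have hz : ![(0:ℝ),0,0] = 0 := by funext i; fin_cases i <;> rfl
      rw [hz]; ext i j; simp [Matrix.diagonal_apply]
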